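/- Let A be a Heyting algebra with a subordination relation ≺, canonical extension A^δ, and ■ : A → A^δ given by ■x = ⋁{b ∈ A | b ≺ x}. Then the following are equivalent: (i) for all a, x, y ∈ A, if a ≺ x and a ∧ x ≺ y then a ≺ x ∧ y; (ii) for all x, y ∈ A, ■x ∧ (x → ■y) ≤ ■(x ∧ y) holds in A^δ (where → is the Heyting implication of A, extended appropriately, applied to elements of A). -/
import Mathlib


variable {α : Type*} [Order.Frame α]

/-- An element is closed if it is the meet of a nonempty subset of S. -/
def IsClosedElem (S : Set α) (k : α) : Prop :=
  ∃ F : Set α, F ⊆ S ∧ F.Nonempty ∧ k = sInf F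

/-- An element is open if it is the join of a nonempty subset of S. -/
def IsOpenElem (S : Set α) (o : α) : Prop :=
  ∃ I : Set α, I ⊆ S ∧ I.Nonempty ∧ o = sSup I

/-- S is dense: every element is a join of closed elements and a meet of open elements. -/
def IsDenseSub (S : Set α) : Prop :=
  ∀ u : α, u = sSup {k | IsClosedElem S k ∧ k ≤ u} ∧
           u = sInf {o | IsOpenElem S o ∧ u ≤ o}

/-- S is compact. -/
def IsCompactSub (S : Set α) : Prop :=
  ∀ F I : Set α, F ⊆ S → I ⊆ S → F.Nonempty → I.Nonempty → sInf F ≤ sSup I →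
    ∃ a ∈ F, ∃ b ∈ I, a ≤ b

/-- S is a bounded sublattice. -/
def IsBoundedSublattice (S : Set α) : Prop :=
  ⊥ ∈ S ∧ ⊤ ∈ S ∧ ∀ a ∈ S, ∀ b ∈ S, a ⊔ b ∈ S ∧ a ⊓ b ∈ S

/-- A subordination relation on the sublattice S. -/
def IsSubordination (S : Set α) (R : α → α → Prop) : Prop :=
  R ⊥ ⊥ ∧ R ⊤ ⊤ ∧
  (∀ a ∈ S, ∀ b ∈ S, ∀ c ∈ S, R a b → R a c → R a (b ⊓ c)) ∧
  (∀ a ∈ S, ∀ b ∈ S, ∀ c ∈ S, R a c → R b c → R (a ⊔ b) c) ∧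
  (∀ a ∈ S, ∀ b ∈ S, ∀ c ∈ S, ∀ d ∈ S, a ≤ b → R b c → c ≤ d → R a d)

theorem stmt19 (S : Set α) (hS : IsBoundedSublattice S)
    (hhimp : ∀ a ∈ S, ∀ b ∈ S, a ⇨ b ∈ S)
    (hd : IsDenseSub S) (hc : IsCompactSub S)
    (R : α → α → Prop) (hR : IsSubordination S R) :
    (∀ a ∈ S, ∀ x ∈ S, ∀ y ∈ S, R a x → R (a ⊓ x) y → R a (x ⊓ y)) ↔
    (∀ x ∈ S, ∀ y ∈ S,
      sSup {b | b ∈ S ∧ R b x} ⊓ (x ⇨ sSup {b | b ∈ S ∧ R b y}) ≤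
        sSup {b | b ∈ S ∧ R b (x ⊓ y)}) := by
  obtain ⟨hbot, htop, hlat⟩ := hS
  obtain ⟨hRbot, hRtop, hR2, hR3, hR4⟩ := hR
  have hbotmem : ∀ z ∈ S, (⊥ : α) ∈ {b | b ∈ S ∧ R b z} := fun z hz =>
    ⟨hbot, hR4 ⊥ hbot ⊥ hbot ⊥ hbot z hz le_rfl hRbot bot_le⟩
  have hsub : ∀ z : α, {b | b ∈ S ∧ R b z} ⊆ S := fun z b hb => hb.1
  constructor
  · intro h x hx y hy
    have hxy : x ⊓ y ∈ S := (hlat x hx y hy).2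
    set u := sSup {b | b ∈ S ∧ R b x} ⊓ (x ⇨ sSup {b | b ∈ S ∧ R b y}) with hu
    calc u = sSup {k | IsClosedElem S k ∧ k ≤ u} := (hd u).1
      _ ≤ sSup {b | b ∈ S ∧ R b (x ⊓ y)} := by
        apply sSup_le
        rintro k ⟨⟨F, hFS, hFne, rfl⟩, hk⟩
        -- step 1 : get a ∈ S with k ≤ a, R a x
        have hk1 : sInf F ≤ sSup {b | b ∈ S ∧ R b x} := hk.trans inf_le_left
        obtain ⟨a0, ha0F, a, ⟨haS, hax⟩, ha0a⟩ :=
          hc F _ hFS (hsub x) hFne ⟨⊥, hbotmem x hx⟩ hk1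
        have hka : sInf F ≤ a := (sInf_le ha0F).trans ha0a
        -- step 2 : get c ∈ S with sInf F ⊓ x ≤ c, R c y
        have hk2 : sInf F ⊓ x ≤ sSup {b | b ∈ S ∧ R b y} :=
          le_himp_iff.mp (hk.trans inf_le_right)
        have hF' : ((· ⊓ x) '' F) ⊆ S := by
          rintro _ ⟨f, hf, rfl⟩; exact (hlat f (hFS hf) x hx).2
        have hFeq : sInf ((· ⊓ x) '' F) = sInf F ⊓ x := by
          apply le_antisymm
          · obtain ⟨f0, hf0⟩ := hFne
            refine le_inf (le_sInf ?_)
              ((sInf_le (Set.mem_image_of_mem _ hf0)).trans inf_le_right)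
            intro f hf
            exact (sInf_le (Set.mem_image_of_mem _ hf)).trans inf_le_left
          · refine le_sInf ?_
            rintro _ ⟨f, hf, rfl⟩
            exact inf_le_inf_right x (sInf_le hf)
        obtain ⟨c, hcF', d, ⟨hdS, hdy⟩, hcd⟩ :=
          hc ((· ⊓ x) '' F) _ hF' (hsub y) (hFne.image _) ⟨⊥, hbotmem y hy⟩
            (hFeq.le.trans hk2)
        have hcS : c ∈ S := hF' hcF'
        have hkxc : sInf F ⊓ x ≤ c := hFeq.ge.trans (sInf_le hcF')
        have hcy : R c y := hR4 c hcS d hdS y hy y hy hcd hdy le_rfl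
        -- assemble e
        have hxc : x ⇨ c ∈ S := hhimp x hx c hcS
        set e := a ⊓ (x ⇨ c) with he
        have heS : e ∈ S := (hlat a haS _ hxc).2
        have hke : sInf F ≤ e := le_inf hka (le_himp_iff.mpr hkxc)
        have hex : R e x := hR4 e heS a haS x hx x hx inf_le_left hax le_rfl
        have hexS : e ⊓ x ∈ S := (hlat e heS x hx).2
        have hexc : e ⊓ x ≤ c :=
          (inf_le_inf_right x inf_le_right).trans himp_inf_le
        have hexy : R (e ⊓ x) y := hR4 _ hexS c hcS y hy y hy hexc hcy le_rfl
        have : R e (x ⊓ y) := h e heS x hx y hy hex hexy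
        exact hke.trans (le_sSup ⟨heS, this⟩)
  · intro h a ha x hx y hy hax haxy
    have hxy : x ⊓ y ∈ S := (hlat x hx y hy).2
    have haxS : a ⊓ x ∈ S := (hlat a ha x hx).2
    have h1 : a ≤ sSup {b | b ∈ S ∧ R b x} := le_sSup ⟨ha, hax⟩
    have h2 : a ≤ x ⇨ sSup {b | b ∈ S ∧ R b y} :=
      le_himp_iff.mpr (le_sSup (s := {b | b ∈ S ∧ R b y}) ⟨haxS, haxy⟩)
    have h3 : a ≤ sSup {b | b ∈ S ∧ R b (x ⊓ y)} :=
      (le_inf h1 h2).trans (h x hx y hy)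
    obtain ⟨a0, ha0, b, ⟨hbS, hbxy⟩, hab⟩ :=
      hc {a} _ (by simpa using ha) (hsub (x ⊓ y)) ⟨a, rfl⟩
        ⟨⊥, hbotmem (x ⊓ y) hxy⟩ (by simpa using h3)
    have heq : a0 = a := ha0
    exact hR4 a ha b hbS (x ⊓ y) hxy (x ⊓ y) hxy (heq ▸ hab) hbxy le_rfl
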